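/- Let m ≥ 1 and n ≥ 2m be natural numbers. Then 1 − (m + n − 1)·((m−1)/m)^{n−1} ≤ φ(m, n)/m^n ≤ 1. -/
import Mathlib


/-- `phi m n` is the number of ways to place `n` distinct objects into `m` numbered urns
so that each urn receives at least two objects, i.e. the number of functions
`f : Fin n → Fin m` all of whose fibers have at least two elements. -/
def phi (m n : ℕ) : ℕ :=
  Fintype.card {f : Fin n → Fin m // ∀ i : Fin m, 2 ≤ (Finset.univ.filter fun x => f x = i).card}

open Finset


lemma phi_eq (m n : ℕ) :
    phi m n = (univ.filter fun f : Fin n → Fin m =>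
      ∀ i : Fin m, 2 ≤ (univ.filter fun x => f x = i).card).card := by
  rw [phi, Fintype.card_subtype]

lemma key (m n : ℕ) (hn : 1 ≤ n) :
    m ^ n ≤ phi m n + m * ((m-1)^n + n * (m-1)^(n-1)) := by
  classical
  set good := univ.filter fun f : Fin n → Fin m =>
      ∀ i : Fin m, 2 ≤ (univ.filter fun x => f x = i).card with hgood
  have hsplit : good.card + (univ.filter fun f : Fin n → Fin m =>
      ¬ ∀ i : Fin m, 2 ≤ (univ.filter fun x => f x = i).card).card = m ^ n := by
    rw [hgood, Finset.card_filter_add_card_filter_not, card_univ]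
    simp
  set bad := univ.filter fun f : Fin n → Fin m =>
      ¬ ∀ i : Fin m, 2 ≤ (univ.filter fun x => f x = i).card with hbad
  -- bound bad
  have hB : ∀ i : Fin m,
      (univ.filter fun f : Fin n → Fin m => (univ.filter fun x => f x = i).card ≤ 1) ⊆
        (Fintype.piFinset fun _ : Fin n => (univ.erase i)) ∪
        univ.biUnion (fun x₀ : Fin n =>
          Fintype.piFinset fun x : Fin n => if x = x₀ then {i} else univ.erase i) := by
    intro i f hf
    simp only [mem_filter, mem_univ, true_and] at hf
    interval_cases h : (univ.filter fun x => f x = i).card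
    · rw [Finset.card_eq_zero, Finset.filter_eq_empty_iff] at h
      apply mem_union_left
      simp only [Fintype.mem_piFinset, mem_erase, mem_univ, and_true]
      intro x; exact h (mem_univ x)
    · rw [Finset.card_eq_one] at h
      obtain ⟨x₀, hx₀⟩ := h
      apply mem_union_right
      refine mem_biUnion.2 ⟨x₀, mem_univ _, ?_⟩
      simp only [Fintype.mem_piFinset]
      intro x
      by_cases hx : x = x₀
      · simp only [hx, if_pos rfl, mem_singleton]
        have : x₀ ∈ univ.filter fun x => f x = i := by rw [hx₀]; exact mem_singleton_self _
        simpa using this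
      · simp only [if_neg hx, mem_erase, mem_univ, and_true]
        intro hfx
        have : x ∈ univ.filter fun x => f x = i := by simp [hfx]
        rw [hx₀, mem_singleton] at this
        exact hx this
  have hBcard : ∀ i : Fin m,
      (univ.filter fun f : Fin n → Fin m => (univ.filter fun x => f x = i).card ≤ 1).card ≤
        (m-1)^n + n * (m-1)^(n-1) := by
    intro i
    calc _ ≤ ((Fintype.piFinset fun _ : Fin n => (univ.erase i)) ∪
        univ.biUnion (fun x₀ : Fin n =>
          Fintype.piFinset fun x : Fin n => if x = x₀ then {i} else univ.erase i)).card :=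
        card_le_card (hB i)
      _ ≤ _ + _ := card_union_le _ _
      _ ≤ (m-1)^n + n * (m-1)^(n-1) := by
        gcongr
        · rw [Fintype.card_piFinset]
          simp [Finset.card_erase_of_mem]
        · refine (Finset.card_biUnion_le).trans ?_
          have : ∀ x₀ : Fin n,
              (Fintype.piFinset fun x : Fin n => if x = x₀ then ({i} : Finset (Fin m)) else univ.erase i).card = (m-1)^(n-1) := by
            intro x₀
            rw [Fintype.card_piFinset]
            rw [← Finset.prod_erase_mul _ _ (Finset.mem_univ x₀)]
            have : ∀ x ∈ univ.erase x₀,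
                ((if x = x₀ then ({i} : Finset (Fin m)) else univ.erase i)).card = m - 1 := by
              intro x hx
              simp [Finset.ne_of_mem_erase hx, Finset.card_erase_of_mem]
            rw [Finset.prod_congr rfl this]
            simp [Finset.card_erase_of_mem, Finset.card_univ]
          rw [Finset.sum_congr rfl (fun x _ => this x)]
          simp [mul_comm]
  have hbadcard : bad.card ≤ m * ((m-1)^n + n * (m-1)^(n-1)) := by
    have hsub : bad ⊆ univ.biUnion fun i : Fin m =>
        univ.filter fun f : Fin n → Fin m => (univ.filter fun x => f x = i).card ≤ 1 := by
      intro f hf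
      rw [hbad, mem_filter] at hf
      push_neg at hf
      obtain ⟨i, hi⟩ := hf.2
      exact mem_biUnion.2 ⟨i, mem_univ _, by simp [Nat.lt_succ_iff] at hi ⊢; omega⟩
    calc bad.card ≤ _ := card_le_card hsub
      _ ≤ ∑ i : Fin m, (univ.filter fun f : Fin n → Fin m => (univ.filter fun x => f x = i).card ≤ 1).card := card_biUnion_le
      _ ≤ ∑ i : Fin m, ((m-1)^n + n * (m-1)^(n-1)) := Finset.sum_le_sum fun i _ => hBcard i
      _ = m * ((m-1)^n + n * (m-1)^(n-1)) := by simp [mul_comm]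
  calc m ^ n = good.card + bad.card := hsplit.symm
    _ ≤ good.card + m * ((m-1)^n + n * (m-1)^(n-1)) := Nat.add_le_add_left hbadcard _
    _ = phi m n + m * ((m-1)^n + n * (m-1)^(n-1)) := by rw [phi_eq]

theorem phi_bounds (m n : ℕ) (hm : 1 ≤ m) (hn : 2 * m ≤ n) :
    1 - ((m : ℝ) + n - 1) * (((m : ℝ) - 1) / m) ^ (n - 1) ≤ (phi m n : ℝ) / (m : ℝ) ^ n ∧
      (phi m n : ℝ) / (m : ℝ) ^ n ≤ 1 := by
  have hn1 : 1 ≤ n := by omega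
  have hm0 : (0:ℝ) < m := by exact_mod_cast hm
  have hupper : (phi m n : ℝ) ≤ (m:ℝ)^n := by
    have : phi m n ≤ m ^ n := by
      rw [phi]
      calc _ ≤ Fintype.card (Fin n → Fin m) := Fintype.card_subtype_le _
        _ = m ^ n := by simp
    exact_mod_cast this
  constructor
  · have hk := key m n hn1
    have hk' : ((m:ℝ))^n ≤ (phi m n : ℝ) + m * (((m:ℝ)-1)^n + n * ((m:ℝ)-1)^(n-1)) := by
      have := (Nat.cast_le (α := ℝ)).2 hk
      push_cast [Nat.cast_sub hm] at this
      exact this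
    rw [le_div_iff₀ (by positivity)]
    have hpow : (m:ℝ)^n = (m:ℝ)^(n-1) * m := by
      rw [← pow_succ, Nat.sub_add_cancel hn1]
    have hpow2 : ((m:ℝ)-1)^n = ((m:ℝ)-1)^(n-1) * ((m:ℝ)-1) := by
      rw [← pow_succ, Nat.sub_add_cancel hn1]
    calc (1 - ((m : ℝ) + n - 1) * (((m : ℝ) - 1) / m) ^ (n - 1)) * (m:ℝ)^n
        = (m:ℝ)^n - m * (((m:ℝ)-1)^n + n * ((m:ℝ)-1)^(n-1)) := by
          rw [div_pow, hpow, hpow2]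
          field_simp
          ring
      _ ≤ (phi m n : ℝ) := by linarith
  · rw [div_le_one (by positivity)]
    exact hupper
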